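/- Let f be the morphism on {0,1} with f(0) = 01, f(1) = 101, let g be the morphism on {0,1,2} with g(0) = 021, g(1) = 102, g(2) = 02, and let ρ be the coding with ρ(0) = 0, ρ(1) = ρ(2) = 1. Then f^∞(0) = ρ(g^∞(0)). -/
import Mathlib


/-- A morphism `f : Γ → Γ⁺` applied to a finite word, by concatenation. -/
def applyW {Γ : Type*} (f : Γ → List Γ) (w : List Γ) : List Γ := w.flatMap f

/-- A morphism applied to an infinite sequence, by concatenation
(meaningful when every `f a` is nonempty: then the `n`-th letter of
`f(σ(0))f(σ(1))⋯` lies within the first `n+1` blocks). -/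
def applyS {Γ : Type*} (f : Γ → List Γ) (σ : ℕ → Γ) (n : ℕ) : Γ :=
  ((List.range (n + 1)).flatMap fun i => f (σ i)).getD n (σ 0)

/-- A coding applied letterwise to an infinite sequence. -/
def applyC {Γ S : Type*} (τ : Γ → S) (σ : ℕ → Γ) : ℕ → S := fun n => τ (σ n)

/-- The fixed point `f^∞(a)` of a morphism `f` with `f a = a·u`, `u` nonempty:
its `n`-th letter is the `n`-th letter of `f^(n+1)(a)` (which has length `> n`). -/
def fixpt {Γ : Type*} (f : Γ → List Γ) (a : Γ) (n : ℕ) : Γ :=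
  ((applyW f)^[n + 1] [a]).getD n a

section aux

lemma applyW_eq_flatMap {Γ : Type*} (f : Γ → List Γ) (w : List Γ) :
    applyW f w = w.flatMap f := rfl

lemma applyW_append {Γ : Type*} (f : Γ → List Γ) (u v : List Γ) :
    applyW f (u ++ v) = applyW f u ++ applyW f v := by
  simp [applyW]

lemma applyW_iterate_append {Γ : Type*} (f : Γ → List Γ) (n : ℕ) (u v : List Γ) :
    (applyW f)^[n] (u ++ v) = (applyW f)^[n] u ++ (applyW f)^[n] v := by
  induction n generalizing u v with
  | zero => rfl
  | succ n ih =>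
    rw [Function.iterate_succ_apply, Function.iterate_succ_apply,
      Function.iterate_succ_apply, applyW_append, ih]

/-- conjugation `m' ∘ σ = σ ∘ m` on letters extends to words. -/
lemma flatMap_comm {A B : Type*} (m : A → List A) (σ : A → List B) (m' : B → List B)
    (h : ∀ a, (σ a).flatMap m' = (m a).flatMap σ) :
    ∀ w : List A, (w.flatMap σ).flatMap m' = (w.flatMap m).flatMap σ := by
  intro w
  induction w with
  | nil => rfl
  | cons a w ih =>
    rw [List.flatMap_cons, List.flatMap_cons, List.flatMap_append, ih, h,
      List.flatMap_append]

lemma map_flatMap' {A B C : Type*} (σ : A → List B) (τ : B → C) (σ' : A → List C)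
    (h : ∀ a, (σ a).map τ = σ' a) :
    ∀ w : List A, (w.flatMap σ).map τ = w.flatMap σ' := by
  intro w
  induction w with
  | nil => rfl
  | cons a w ih =>
    rw [List.flatMap_cons, List.flatMap_cons, List.map_append, ih, h]

lemma length_flatMap_le {A B : Type*} (σ : A → List B) (h : ∀ a, 1 ≤ (σ a).length) :
    ∀ w : List A, w.length ≤ (w.flatMap σ).length := by
  intro w
  induction w with
  | nil => simp
  | cons a w ih =>
    rw [List.flatMap_cons, List.length_append, List.length_cons]
    have := h a
    omega

lemma length_flatMap_le2 {A B : Type*} (σ : A → List B) (h : ∀ a, 2 ≤ (σ a).length) :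
    ∀ w : List A, 2 * w.length ≤ (w.flatMap σ).length := by
  intro w
  induction w with
  | nil => simp
  | cons a w ih =>
    rw [List.flatMap_cons, List.length_append, List.length_cons]
    have := h a
    omega

end aux

namespace Stmt11

/-- the morphism f on {0,1}. -/
def ff : Fin 2 → List (Fin 2) := ![[0, 1], [1, 0, 1]]
/-- the morphism g on {0,1,2}. -/
def gg : Fin 3 → List (Fin 3) := ![[0, 2, 1], [1, 0, 2], [0, 2]]
/-- the coding ρ. -/
def rho : Fin 3 → Fin 2 := ![0, 1, 1]
/-- intermediate morphism h : 0→010, 1→10. -/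
def hh : Fin 2 → List (Fin 2) := ![[0, 1, 0], [1, 0]]
/-- morphism ρ' : 0→01, 1→1 with ρ'∘h = f∘ρ'. -/
def rr : Fin 2 → List (Fin 2) := ![[0, 1], [1]]
/-- morphism φ : 0→02, 1→1 with φ∘h = g∘φ and ρ∘φ = ρ'. -/
def pp : Fin 2 → List (Fin 3) := ![[0, 2], [1]]

lemma key1 (a : Fin 2) : (rr a).flatMap ff = (hh a).flatMap rr := by
  fin_cases a <;> rfl

lemma key2 (a : Fin 2) : (pp a).flatMap gg = (hh a).flatMap pp := by
  fin_cases a <;> rfl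

lemma key3 (a : Fin 2) : (pp a).map rho = rr a := by
  fin_cases a <;> rfl

/-- the words w_n = h^n(0). -/
def wn (n : ℕ) : List (Fin 2) := (applyW hh)^[n] [0]

lemma wn_succ (n : ℕ) : wn (n + 1) = (wn n).flatMap hh := by
  rw [wn, Function.iterate_succ_apply', wn]; rfl

lemma conj1 (n : ℕ) : (applyW ff)^[n + 1] [0] = (wn n).flatMap rr := by
  induction n with
  | zero => rfl
  | succ n ih =>
    rw [Function.iterate_succ_apply', ih, applyW_eq_flatMap,
      flatMap_comm hh rr ff key1, wn_succ]

lemma conj2 (n : ℕ) : (applyW gg)^[n] [0, 2] = (wn n).flatMap pp := by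
  induction n with
  | zero => rfl
  | succ n ih =>
    rw [Function.iterate_succ_apply', ih, applyW_eq_flatMap,
      flatMap_comm hh pp gg key2, wn_succ]

lemma length_wn (n : ℕ) : n + 1 ≤ (wn n).length := by
  induction n with
  | zero => rfl
  | succ n ih =>
    have h2 : ∀ a : Fin 2, 2 ≤ (hh a).length := by decide
    have := length_flatMap_le2 hh h2 (wn n)
    rw [wn_succ]
    omega

lemma length_pp (n : ℕ) : n + 1 ≤ ((wn n).flatMap pp).length := by
  have h1 : ∀ a : Fin 2, 1 ≤ (pp a).length := by decide
  have := length_flatMap_le pp h1 (wn n)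
  have := length_wn n
  omega

end Stmt11

open Stmt11 in
/-- `f^∞(0) = ρ(g^∞(0))` for `f(0)=01, f(1)=101`, `g(0)=021, g(1)=102, g(2)=02`,
`ρ(0)=0, ρ(1)=ρ(2)=1`. -/
theorem stmt_11 :
    fixpt (![[0, 1], [1, 0, 1]] : Fin 2 → List (Fin 2)) 0 =
      applyC (![0, 1, 1] : Fin 3 → Fin 2)
        (fixpt (![[0, 2, 1], [1, 0, 2], [0, 2]] : Fin 3 → List (Fin 3)) 0) := by
  funext n
  show ((applyW ff)^[n + 1] [0]).getD n 0 = rho (((applyW gg)^[n + 1] [(0 : Fin 3)]).getD n 0)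
  -- decompose g^(n+1)(0) = g^n(0 2) ++ g^n(1)
  have hsplit : (applyW gg)^[n + 1] [(0 : Fin 3)]
      = (wn n).flatMap pp ++ (applyW gg)^[n] [1] := by
    rw [Function.iterate_succ_apply,
      show applyW gg [(0 : Fin 3)] = [0, 2] ++ [1] from rfl,
      applyW_iterate_append, conj2]
  rw [conj1, hsplit]
  have hlen : n < ((wn n).flatMap pp).length := length_pp n
  have hmap : (wn n).flatMap rr = ((wn n).flatMap pp).map rho :=
    (map_flatMap' pp rho rr key3 (wn n)).symm
  have hlen' : n < ((wn n).flatMap rr).length := by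
    rw [hmap, List.length_map]; exact hlen
  rw [List.getD_eq_getElem _ _ hlen',
    List.getD_eq_getElem _ _ (by rw [List.length_append]; omega)]
  rw [List.getElem_append_left hlen]
  simp only [hmap, List.getElem_map]
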